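/- With ε, p, N_L, ω_L and N_R as in the context, set ω_R = 1/ω_L, T_L = ξ − ε g_L(N_L, ξ) N_L and T_R = ξ − g_R(N_R, ξ) N_R. Then: (i) 2 g_R(N_R, ξ)² = 1 − ε ω_R²; (ii) N_L = (1/ω_R)(√(2(1 − ε ω_R²)) ξ − N_R); and (iii) T_R = (ε/ω_L²) T_L. -/

import Mathlib

set_option maxHeartbeats 1000000


noncomputable section

open Real

/-- Points/vectors of `ℝ³`. -/
abbrev V3 : Type := ℝ × ℝ × ℝ

/-- The domain `D`: all of `ℝ³` if `κ ≥ 0`, the solid cylinder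
`{x² + y² < -4/κ}` if `κ < 0`. -/
def Dset (κ : ℝ) : Set V3 := {p | κ < 0 → p.1 ^ 2 + p.2.1 ^ 2 < -4 / κ}

/-- The conformal factor `λ`. -/
def lam (κ : ℝ) (p : V3) : ℝ := 1 / (1 + κ / 4 * (p.1 ^ 2 + p.2.1 ^ 2))

/-- The Riemannian BCV metric `g_R` at the point `p`, evaluated on vectors `u, v`. -/
def gR (κ τ : ℝ) (p u v : V3) : ℝ :=
  (lam κ p) ^ 2 * (u.1 * v.1 + u.2.1 * v.2.1) +
    (u.2.2 + τ * lam κ p * (p.2.1 * u.1 - p.1 * u.2.1)) *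
      (v.2.2 + τ * lam κ p * (p.2.1 * v.1 - p.1 * v.2.1))

/-- The Lorentzian BCV metric `g_L` at the point `p`, evaluated on vectors `u, v`. -/
def gL (κ τ : ℝ) (p u v : V3) : ℝ :=
  (lam κ p) ^ 2 * (u.1 * v.1 + u.2.1 * v.2.1) -
    (u.2.2 + τ * lam κ p * (p.2.1 * u.1 - p.1 * u.2.1)) *
      (v.2.2 + τ * lam κ p * (p.2.1 * v.1 - p.1 * v.2.1))

/-- The frame field `E₁` (with `σ = κ/(2τ)`). -/
def E1 (κ τ : ℝ) (p : V3) : V3 :=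
  ((lam κ p)⁻¹ * cos (κ / (2 * τ) * p.2.2),
   (lam κ p)⁻¹ * sin (κ / (2 * τ) * p.2.2),
   τ * (p.1 * sin (κ / (2 * τ) * p.2.2) - p.2.1 * cos (κ / (2 * τ) * p.2.2)))

/-- The frame field `E₂` (with `σ = κ/(2τ)`). -/
def E2 (κ τ : ℝ) (p : V3) : V3 :=
  (-((lam κ p)⁻¹ * sin (κ / (2 * τ) * p.2.2)),
   (lam κ p)⁻¹ * cos (κ / (2 * τ) * p.2.2),
   τ * (p.1 * cos (κ / (2 * τ) * p.2.2) + p.2.1 * sin (κ / (2 * τ) * p.2.2)))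

/-- The (constant) frame field `E₃ = ∂_z`. -/
def E3 : V3 := (0, 0, 1)

/-- The Killing field `ξ = E₃`. -/
def xi : V3 := E3

/-- First coefficient of a vector in the frame `{E₁,E₂,E₃}` (extracted with `g_R`;
the frame is `g_R`-orthonormal on `D`). -/
def c1 (κ τ : ℝ) (p : V3) (u : V3) : ℝ := gR κ τ p u (E1 κ τ p)

/-- Second frame coefficient. -/
def c2 (κ τ : ℝ) (p : V3) (u : V3) : ℝ := gR κ τ p u (E2 κ τ p)

/-- Third frame coefficient. -/
def c3 (κ τ : ℝ) (p : V3) (u : V3) : ℝ := gR κ τ p u E3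

/-- The Riemannian cross product `u ∧_R v` at `p`. -/
def wedgeR (κ τ : ℝ) (p : V3) (u v : V3) : V3 :=
  (c2 κ τ p u * c3 κ τ p v - c3 κ τ p u * c2 κ τ p v) • E1 κ τ p
    - (c1 κ τ p u * c3 κ τ p v - c3 κ τ p u * c1 κ τ p v) • E2 κ τ p
    + (c1 κ τ p u * c2 κ τ p v - c2 κ τ p u * c1 κ τ p v) • E3

/-- The Lorentzian cross product `u ∧_L v` at `p`. -/
def wedgeL (κ τ : ℝ) (p : V3) (u v : V3) : V3 :=
  (c2 κ τ p u * c3 κ τ p v - c3 κ τ p u * c2 κ τ p v) • E1 κ τ p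
    - (c1 κ τ p u * c3 κ τ p v - c3 κ τ p u * c1 κ τ p v) • E2 κ τ p
    - (c1 κ τ p u * c2 κ τ p v - c2 κ τ p u * c1 κ τ p v) • E3

/-- The Lie bracket of vector fields on (an open subset of) `ℝ³`:
`[X,Y](p) = DY(p)(X(p)) − DX(p)(Y(p))`. -/
def lie (X Y : V3 → V3) (p : V3) : V3 :=
  fderiv ℝ Y p (X p) - fderiv ℝ X p (Y p)

/-- The explicit connection `∇ᴿ` of `𝔼³(κ,τ)`. -/
def nablaR (κ τ : ℝ) (X Y : V3 → V3) (p : V3) : V3 :=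
  (fderiv ℝ (fun q => c1 κ τ q (Y q)) p (X p)) • E1 κ τ p
    + (fderiv ℝ (fun q => c2 κ τ q (Y q)) p (X p)) • E2 κ τ p
    + (fderiv ℝ (fun q => c3 κ τ q (Y q)) p (X p)) • E3
    + (τ * c2 κ τ p (X p) * c3 κ τ p (Y p)) • E1 κ τ p
    - (τ * c1 κ τ p (X p) * c3 κ τ p (Y p)) • E2 κ τ p
    + (τ * (c1 κ τ p (X p) * c2 κ τ p (Y p) - c2 κ τ p (X p) * c1 κ τ p (Y p))) • E3
    + ((κ - 2 * τ ^ 2) / (2 * τ) * (c3 κ τ p (X p) * c1 κ τ p (Y p))) • E2 κ τ p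
    - ((κ - 2 * τ ^ 2) / (2 * τ) * (c3 κ τ p (X p) * c2 κ τ p (Y p))) • E1 κ τ p

/-- The explicit connection `∇ᴸ` of `𝕃³(κ,τ)`. -/
def nablaL (κ τ : ℝ) (X Y : V3 → V3) (p : V3) : V3 :=
  (fderiv ℝ (fun q => c1 κ τ q (Y q)) p (X p)) • E1 κ τ p
    + (fderiv ℝ (fun q => c2 κ τ q (Y q)) p (X p)) • E2 κ τ p
    + (fderiv ℝ (fun q => c3 κ τ q (Y q)) p (X p)) • E3
    - (τ * c2 κ τ p (X p) * c3 κ τ p (Y p)) • E1 κ τ p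
    + (τ * c1 κ τ p (X p) * c3 κ τ p (Y p)) • E2 κ τ p
    + (τ * (c1 κ τ p (X p) * c2 κ τ p (Y p) - c2 κ τ p (X p) * c1 κ τ p (Y p))) • E3
    + ((κ + 2 * τ ^ 2) / (2 * τ) * (c3 κ τ p (X p) * c1 κ τ p (Y p))) • E2 κ τ p
    - ((κ + 2 * τ ^ 2) / (2 * τ) * (c3 κ τ p (X p) * c2 κ τ p (Y p))) • E1 κ τ p

/-- `ω_L = √(ε + 2 g_L(N, ξ)²)`. -/
def omegaL (κ τ ε : ℝ) (p : V3) (N : V3) : ℝ :=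
  Real.sqrt (ε + 2 * (gL κ τ p N xi) ^ 2)

/-- `ω_R = 1/ω_L`. -/
def omegaR (κ τ ε : ℝ) (p : V3) (N : V3) : ℝ := 1 / omegaL κ τ ε p N

/-- The Riemannian unit normal `N_R = (1/ω_L)(√(2(ω_L² − ε)) ξ − N_L)`. -/
def NRof (κ τ ε : ℝ) (p : V3) (N : V3) : V3 :=
  (1 / omegaL κ τ ε p N) • (Real.sqrt (2 * ((omegaL κ τ ε p N) ^ 2 - ε)) • xi - N)

/-- `g_L(p)(n, ·)` as a linear form. -/
def gLlin (κ τ : ℝ) (p n : V3) : V3 →ₗ[ℝ] ℝ where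
  toFun v := gL κ τ p n v
  map_add' v w := by
    simp only [gL, Prod.fst_add, Prod.snd_add]
    ring
  map_smul' r v := by
    simp only [gL, Prod.smul_fst, Prod.smul_snd, smul_eq_mul, RingHom.id_apply]
    ring

/-- The tangent plane at `p` determined by the normal `n`:
`P_p = {v : g_L(n,v) = 0}`. -/
def Pp (κ τ : ℝ) (p n : V3) : Submodule ℝ V3 := LinearMap.ker (gLlin κ τ p n)

/-- The Lorentzian shape operator `A_L v = −∇ᴸ_v N_L`. -/
def AL (κ τ : ℝ) (NL : V3 → V3) (p : V3) (v : V3) : V3 :=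
  -(nablaL κ τ (fun _ => v) NL p)

/-- The Riemannian shape operator `A_R v = −∇ᴿ_v N_R`. -/
def AR (κ τ ε : ℝ) (NL : V3 → V3) (p : V3) (v : V3) : V3 :=
  -(nablaR κ τ (fun _ => v) (fun q => NRof κ τ ε q (NL q)) p)

/-- The tangential part `T_L = ξ − ε g_L(N_L, ξ) N_L`. -/
def TLof (κ τ ε : ℝ) (p : V3) (N : V3) : V3 := xi - (ε * gL κ τ p N xi) • N

/-- The tangential part `T_R = ξ − g_R(N_R, ξ) N_R`. -/
def TRof (κ τ ε : ℝ) (p : V3) (N : V3) : V3 :=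
  xi - (gR κ τ p (NRof κ τ ε p N) xi) • NRof κ τ ε p N

/-- The rotation `J_L v = N_L ∧_L v`. -/
def JL (κ τ : ℝ) (p : V3) (N : V3) (v : V3) : V3 := wedgeL κ τ p N v

/-- The rotation `J_R v = N_R ∧_R v`. -/
def JR (κ τ : ℝ) (p : V3) (N : V3) (v : V3) : V3 := wedgeR κ τ p N v

/-- relations involving `ω_R = 1/ω_L`, the expression of `N_L`
in terms of `N_R`, and `T_R = (ε/ω_L²) T_L`. -/
theorem NL_TL_relations (κ τ : ℝ) (hτ : τ ≠ 0) (ε : ℝ) (hε : ε = -1 ∨ ε = 1)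
    (p : V3) (hp : p ∈ Dset κ) (NL : V3)
    (hNL : gL κ τ p NL NL = ε) (hle : gL κ τ p NL xi ≤ 0) :
    2 * (gR κ τ p (NRof κ τ ε p NL) xi) ^ 2 = 1 - ε * (omegaR κ τ ε p NL) ^ 2 ∧
    NL = (1 / omegaR κ τ ε p NL) •
      (Real.sqrt (2 * (1 - ε * (omegaR κ τ ε p NL) ^ 2)) • xi - NRof κ τ ε p NL) ∧
    TRof κ τ ε p NL = (ε / (omegaL κ τ ε p NL) ^ 2) • TLof κ τ ε p NL := by
  have hε1 : ε ^ 2 = 1 := by rcases hε with h | h <;> subst h <;> norm_num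
  have hεne : ε ≠ 0 := by rcases hε with h | h <;> subst h <;> norm_num
  set L := lam κ p with hL
  set w : ℝ := NL.2.2 + τ * L * (p.2.1 * NL.1 - p.1 * NL.2.1) with hw
  have hgLxi : gL κ τ p NL xi = -w := by
    simp only [gL, xi, E3, hw, ← hL]; ring
  have hwpos : 0 ≤ w := by rw [hgLxi] at hle; linarith
  have hS : L ^ 2 * (NL.1 ^ 2 + NL.2.1 ^ 2) - w ^ 2 = ε := by
    rw [← hNL]; simp only [gL, hw, ← hL]; ring
  have hA : 0 ≤ L ^ 2 * (NL.1 ^ 2 + NL.2.1 ^ 2) := by positivity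
  have hpos : 0 < ε + 2 * w ^ 2 := by nlinarith [sq_nonneg w]
  have hωL : omegaL κ τ ε p NL = Real.sqrt (ε + 2 * w ^ 2) := by
    rw [omegaL, hgLxi, neg_pow]; ring_nf
  set Ω := omegaL κ τ ε p NL with hΩ
  have hω2 : Ω ^ 2 = ε + 2 * w ^ 2 := by rw [hωL]; exact Real.sq_sqrt hpos.le
  have hωpos : 0 < Ω := by rw [hωL]; exact Real.sqrt_pos.mpr hpos
  have hωne : Ω ≠ 0 := hωpos.ne'
  have hsqrt1 : Real.sqrt (2 * (Ω ^ 2 - ε)) = 2 * w := by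
    rw [hω2, show 2 * (ε + 2 * w ^ 2 - ε) = (2 * w) ^ 2 by ring,
      Real.sqrt_sq (by linarith)]
  have hNR : NRof κ τ ε p NL =
      (-NL.1 / Ω, -NL.2.1 / Ω, (2 * w - NL.2.2) / Ω) := by
    rw [NRof, ← hΩ, hsqrt1]
    simp only [xi, E3, Prod.smul_mk, smul_eq_mul, Prod.mk_sub_mk, Prod.ext_iff,
      Prod.fst_sub, Prod.snd_sub, Prod.smul_fst, Prod.smul_snd]
    refine ⟨?_, ?_, ?_⟩ <;> · field_simp; try ring
  have hcR : gR κ τ p (NRof κ τ ε p NL) xi = w / Ω := by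
    rw [hNR]; simp only [gR, xi, E3, ← hL, hw]
    field_simp; ring
  have hωR : omegaR κ τ ε p NL = 1 / Ω := by rw [omegaR, hΩ]
  have h1 : 2 * (gR κ τ p (NRof κ τ ε p NL) xi) ^ 2
      = 1 - ε * (omegaR κ τ ε p NL) ^ 2 := by
    rw [hcR, hωR]; field_simp; nlinarith [hω2]
  refine ⟨h1, ?_, ?_⟩
  · have hsqrt2 : Real.sqrt (2 * (1 - ε * (omegaR κ τ ε p NL) ^ 2)) = 2 * w / Ω := by
      rw [← h1, hcR, show 2 * (2 * (w / Ω) ^ 2) = (2 * w / Ω) ^ 2 by ring,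
        Real.sqrt_sq (by positivity)]
    rw [hsqrt2, hωR, hNR]
    simp only [xi, E3, Prod.smul_mk, smul_eq_mul, Prod.mk_sub_mk, one_div, inv_inv,
      Prod.ext_iff, Prod.fst_sub, Prod.snd_sub, Prod.smul_fst, Prod.smul_snd]
    refine ⟨?_, ?_, ?_⟩ <;> · field_simp; try ring
  · have e1 : ε * ε = 1 := by rw [← hε1]; ring
    simp only [TRof, TLof]
    rw [hcR, hNR, hgLxi]
    simp only [xi, E3, Prod.smul_mk, smul_eq_mul, Prod.mk_sub_mk, Prod.ext_iff,
      Prod.fst_sub, Prod.snd_sub, Prod.smul_fst, Prod.smul_snd]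
    refine ⟨?_, ?_, ?_⟩ <;> field_simp
    · linear_combination -(w * NL.1) * e1
    · linear_combination -(w * NL.2.1) * e1
    · linear_combination hω2 - w * NL.2.2 * e1

end
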